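/- In the setting of contextual bandits with cross-learning with stochastic rewards and an adversarially fixed context sequence, suppose Δ* > 0 is such that Δ_i(c) ≥ Δ* for every pair (i, c) with μ_i(c) < μ*(c). Then there is a universal constant C₀ > 0 such that for all T ≥ max(K, 2), the UCB1.CL algorithm satisfies E[Reg] ≤ C₀ · K · log T / Δ*, where Reg = Σ_{t=1}^T Δ_{I_t}(c_t). -/

import Mathlib

open MeasureTheory ProbabilityTheory Finset

lemma hoeff_analytic (p : ℝ) (hp0 : 0 ≤ p) (hp1 : p ≤ 1) (L : ℝ) :
    Real.exp (-(L*p)) * (1 - p + p * Real.exp L) ≤ Real.exp (L^2/8) := by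
  have hD : ∀ x : ℝ, 0 < 1 - p + p * Real.exp x := by
    intro x
    rcases eq_or_lt_of_le hp0 with h | h
    · rw [← h]; norm_num
    · have := mul_pos h (Real.exp_pos x)
      linarith
  set φ : ℝ → ℝ := fun x => x^2/8 + x*p - Real.log (1 - p + p * Real.exp x) with hφdef
  set ψ : ℝ → ℝ := fun x => x/4 + p - p * Real.exp x / (1 - p + p * Real.exp x) with hψdef
  have hDer : ∀ x : ℝ, HasDerivAt (fun y => 1 - p + p * Real.exp y) (p * Real.exp x) x := by
    intro x
    simpa using ((Real.hasDerivAt_exp x).const_mul p).const_add (1 - p)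
  have hφ' : ∀ x, HasDerivAt φ (ψ x) x := by
    intro x
    have h1 : HasDerivAt (fun y : ℝ => y^2/8 + y*p) (x/4 + p) x := by
      have := ((hasDerivAt_pow 2 x).div_const 8).add ((hasDerivAt_id x).mul_const p)
      exact this.congr_deriv (by have h21 : (2:ℕ) - 1 = 1 := rfl; rw [h21, pow_one]; ring)
    have h2 : HasDerivAt (fun y => Real.log (1 - p + p * Real.exp y))
        (p * Real.exp x / (1 - p + p * Real.exp x)) x := (hDer x).log (hD x).ne'
    exact h1.sub h2
  have hψ' : ∀ x, HasDerivAt ψ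
      (1/4 - p * Real.exp x * (1 - p) / (1 - p + p * Real.exp x)^2) x := by
    intro x
    have h2 : HasDerivAt (fun y => p * Real.exp y / (1 - p + p * Real.exp y))
        ((p * Real.exp x * (1 - p + p * Real.exp x) - p * Real.exp x * (p * Real.exp x)) /
          (1 - p + p * Real.exp x)^2) x :=
      ((Real.hasDerivAt_exp x).const_mul p).div (hDer x) (hD x).ne'
    have h1 : HasDerivAt (fun y : ℝ => y/4 + p) (1/4) x := by
      simpa using ((hasDerivAt_id x).div_const 4).add_const p
    have h3 := h1.sub h2
    exact h3.congr_deriv (by congr 2; ring)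
  have hψ0 : ψ 0 = 0 := by simp [hψdef]
  have hψmono : Monotone ψ := by
    refine monotone_of_deriv_nonneg (fun x => (hψ' x).differentiableAt) ?_
    intro x
    rw [(hψ' x).deriv]
    have hDx := hD x
    have hq : p * Real.exp x * (1-p) / (1 - p + p * Real.exp x)^2 ≤ 1/4 := by
      rw [div_le_iff₀ (by positivity)]
      nlinarith [sq_nonneg (p * Real.exp x - (1 - p)), Real.exp_pos x]
    linarith
  have hφcont : Continuous φ := by
    have : Differentiable ℝ φ := fun x => (hφ' x).differentiableAt
    exact this.continuous
  have hφ0 : φ 0 = 0 := by simp [hφdef]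
  have key : 0 ≤ φ L := by
    rcases le_total 0 L with hx | hx
    · have hmono : MonotoneOn φ (Set.Ici 0) := by
        refine monotoneOn_of_deriv_nonneg (convex_Ici 0) hφcont.continuousOn
          (fun y _ => (hφ' y).differentiableAt.differentiableWithinAt) ?_
        intro y hy
        rw [interior_Ici] at hy
        rw [(hφ' y).deriv]
        have h0y : (0:ℝ) ≤ y := le_of_lt hy
        have := hψmono h0y
        rw [hψ0] at this
        exact this
      have := hmono (Set.mem_Ici.mpr le_rfl) (Set.mem_Ici.mpr hx) hx
      rw [hφ0] at this; exact this
    · have hmono : AntitoneOn φ (Set.Iic 0) := by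
        refine antitoneOn_of_deriv_nonpos (convex_Iic 0) hφcont.continuousOn
          (fun y _ => (hφ' y).differentiableAt.differentiableWithinAt) ?_
        intro y hy
        rw [interior_Iic] at hy
        rw [(hφ' y).deriv]
        have h0y : y ≤ (0:ℝ) := le_of_lt hy
        have := hψmono h0y
        rw [hψ0] at this
        exact this
      have := hmono (Set.mem_Iic.mpr hx) (Set.mem_Iic.mpr le_rfl) hx
      rw [hφ0] at this; exact this
  have hlog : Real.log (1 - p + p * Real.exp L) ≤ L^2/8 + L*p := by
    simp only [hφdef] at key
    linarith [key]
  calc Real.exp (-(L*p)) * (1 - p + p * Real.exp L)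
      = Real.exp (-(L*p) + Real.log (1 - p + p * Real.exp L)) := by
        rw [Real.exp_add, Real.exp_log (hD L)]
    _ ≤ Real.exp (L^2/8) := by
        apply Real.exp_le_exp.mpr
        linarith

lemma hoeff_mgf (ν : Measure ℝ) [IsProbabilityMeasure ν]
    (hsupp : ∀ᵐ x ∂ν, x ∈ Set.Icc (0:ℝ) 1) (L : ℝ) :
    ∫ x, Real.exp (L * (x - ∫ y, y ∂ν)) ∂ν ≤ Real.exp (L^2/8) := by
  set p := ∫ y, y ∂ν with hp
  have hint_id : Integrable (fun x : ℝ => x) ν := by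
    refine Integrable.mono' (integrable_const 1) measurable_id.aestronglyMeasurable ?_
    filter_upwards [hsupp] with x hx
    rw [Real.norm_eq_abs, abs_le]
    exact ⟨by linarith [hx.1], hx.2⟩
  have hp0 : 0 ≤ p := integral_nonneg_of_ae (by filter_upwards [hsupp] with x hx using hx.1)
  have hp1 : p ≤ 1 := by
    have := integral_mono_ae hint_id (integrable_const 1)
      (by filter_upwards [hsupp] with x hx using hx.2)
    simpa using this
  have hintexp : Integrable (fun x => Real.exp (L * x)) ν := by
    refine Integrable.mono' (integrable_const (Real.exp |L|))
      (Real.continuous_exp.comp (continuous_const.mul continuous_id)).aestronglyMeasurable ?_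
    filter_upwards [hsupp] with x hx
    rw [Real.norm_eq_abs, abs_of_pos (Real.exp_pos _), Real.exp_le_exp]
    calc L * x ≤ |L * x| := le_abs_self _
      _ = |L| * |x| := abs_mul _ _
      _ ≤ |L| * 1 := by
          apply mul_le_mul_of_nonneg_left _ (abs_nonneg L)
          rw [abs_le]; exact ⟨by linarith [hx.1], hx.2⟩
      _ = |L| := mul_one _
  have hconv : ∀ᵐ x ∂ν, Real.exp (L*x) ≤ 1 - x + x * Real.exp L := by
    filter_upwards [hsupp] with x hx
    have h := convexOn_exp.2 (Set.mem_univ (0:ℝ)) (Set.mem_univ L)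
      (by linarith [hx.2] : (0:ℝ) ≤ 1 - x) hx.1 (by ring)
    simp only [smul_eq_mul, mul_zero, Real.exp_zero, mul_one, zero_add] at h
    calc Real.exp (L*x) = Real.exp (x*L) := by rw [mul_comm]
      _ ≤ 1 - x + x * Real.exp L := h
  have h2int : Integrable (fun x => 1 - x + x * Real.exp L) ν :=
    ((integrable_const 1).sub hint_id).add (hint_id.mul_const _)
  have hmain : ∫ x, Real.exp (L*x) ∂ν ≤ 1 - p + p * Real.exp L := by
    calc ∫ x, Real.exp (L*x) ∂ν ≤ ∫ x, (1 - x + x * Real.exp L) ∂ν :=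
          integral_mono_ae hintexp h2int hconv
      _ = 1 - p + p * Real.exp L := by
          have ha : Integrable (fun x : ℝ => 1 - x) ν := (integrable_const 1).sub hint_id
          rw [integral_add ha (hint_id.mul_const _),
              integral_sub (integrable_const 1) hint_id, integral_mul_const]
          simp [hp]
  calc ∫ x, Real.exp (L * (x - p)) ∂ν
      = ∫ x, Real.exp (L*x) * Real.exp (-(L*p)) ∂ν := by
        congr 1; funext x; rw [← Real.exp_add]; ring_nf
    _ = (∫ x, Real.exp (L*x) ∂ν) * Real.exp (-(L*p)) := integral_mul_const _ _
    _ ≤ (1 - p + p*Real.exp L) * Real.exp (-(L*p)) := by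
        apply mul_le_mul_of_nonneg_right hmain (Real.exp_pos _).le
    _ ≤ Real.exp (L^2/8) := by rw [mul_comm]; exact hoeff_analytic p hp0 hp1 L

lemma sum_inv_sqrt_le (N : ℕ) : ∑ n ∈ Finset.Icc 1 N, (1 / Real.sqrt n) ≤ 2 * Real.sqrt N := by
  induction N with
  | zero => simp
  | succ N ih =>
    rw [Finset.sum_Icc_succ_top (by omega)]
    have h1 : (0:ℝ) < Real.sqrt (N+1) := Real.sqrt_pos.mpr (by positivity)
    have key : 1 / Real.sqrt ((N:ℝ)+1) ≤ 2 * Real.sqrt ((N:ℝ)+1) - 2 * Real.sqrt N := by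
      rw [div_le_iff₀ (by exact_mod_cast h1)]
      have hs : Real.sqrt N * Real.sqrt N = (N:ℝ) := Real.mul_self_sqrt (by positivity)
      have hs1 : Real.sqrt ((N:ℝ)+1) * Real.sqrt ((N:ℝ)+1) = (N:ℝ)+1 :=
        Real.mul_self_sqrt (by positivity)
      have hmono : Real.sqrt (N:ℝ) ≤ Real.sqrt ((N:ℝ)+1) := Real.sqrt_le_sqrt (by linarith)
      nlinarith [Real.sqrt_nonneg (N:ℝ), Real.sqrt_nonneg ((N:ℝ)+1)]
    push_cast at ih key ⊢
    linarith

noncomputable def tauCL {K : ℕ} (I : ℕ → Fin K) (i : Fin K) (t : ℕ) : ℕ :=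
  ((Finset.range t).filter (fun s => I s = i)).card

noncomputable def sigCL {K C : ℕ} (r : Fin K → ℕ → Fin C → ℝ) (I : ℕ → Fin K)
    (i : Fin K) (t : ℕ) (c : Fin C) : ℝ :=
  ∑ s ∈ (Finset.range t).filter (fun s => I s = i), r i s c

noncomputable def scoreCL {K C : ℕ} (T : ℕ) (r : Fin K → ℕ → Fin C → ℝ) (I : ℕ → Fin K)
    (t : ℕ) (c : Fin C) (i : Fin K) : ℝ :=
  sigCL r I i t c / (tauCL I i t : ℝ) + Real.sqrt (2 * Real.log T / (tauCL I i t : ℝ))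

section CLaux

lemma argmaxSet_nonempty {K : ℕ} (hK : 0 < K) (f : Fin K → ℝ) :
    (Finset.univ.filter (fun j => ∀ j', f j' ≤ f j)).Nonempty := by
  classical
  obtain ⟨b, _, hb⟩ := Finset.exists_max_image (Finset.univ : Finset (Fin K)) f
    ⟨⟨0, hK⟩, Finset.mem_univ _⟩
  exact ⟨b, Finset.mem_filter.mpr ⟨Finset.mem_univ _, fun j' => hb j' (Finset.mem_univ _)⟩⟩

/-- least argmax of a function on `Fin K`. -/
noncomputable def leastArgmax {K : ℕ} (hK : 0 < K) (f : Fin K → ℝ) : Fin K :=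
  (Finset.univ.filter (fun j => ∀ j', f j' ≤ f j)).min' (argmaxSet_nonempty hK f)

lemma leastArgmax_isMax {K : ℕ} (hK : 0 < K) (f : Fin K → ℝ) (j' : Fin K) :
    f j' ≤ f (leastArgmax hK f) := by
  classical
  have h := Finset.min'_mem (Finset.univ.filter (fun j => ∀ j', f j' ≤ f j))
    (argmaxSet_nonempty hK f)
  rw [Finset.mem_filter] at h
  exact h.2 j'

lemma leastArgmax_le {K : ℕ} (hK : 0 < K) (f : Fin K → ℝ) (j : Fin K)
    (hj : ∀ j', f j' ≤ f j) : leastArgmax hK f ≤ j := by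
  classical
  exact Finset.min'_le _ _ (Finset.mem_filter.mpr ⟨Finset.mem_univ _, hj⟩)

lemma leastArgmax_eq_iff {K : ℕ} (hK : 0 < K) (f : Fin K → ℝ) (j : Fin K) :
    leastArgmax hK f = j ↔
      ((∀ j', f j' ≤ f j) ∧ ∀ k, k < j → ¬(∀ j', f j' ≤ f k)) := by
  classical
  constructor
  · rintro rfl
    refine ⟨leastArgmax_isMax hK f, fun k hk hmax => ?_⟩
    have := leastArgmax_le hK f k hmax
    exact absurd hk (not_lt.mpr this)
  · rintro ⟨hmax, hmin⟩
    have h1 : leastArgmax hK f ≤ j := leastArgmax_le hK f j hmax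
    rcases lt_or_eq_of_le h1 with h2 | h2
    · exact absurd (leastArgmax_isMax hK f) (hmin _ h2)
    · exact h2

/-- rerun of UCB1.CL from the reward table alone. -/
noncomputable def actF {K C : ℕ} (hK : 0 < K) (T : ℕ) (ctx : ℕ → Fin C)
    (ρ : Fin K → ℕ → Fin C → ℝ) : ℕ → Fin K
  | t =>
    if h : t < K then ⟨t, h⟩
    else leastArgmax hK (scoreCL T ρ
      (fun s => if hs : s < t then actF hK T ctx ρ s else ⟨0, hK⟩) t (ctx t))
  termination_by t => t
  decreasing_by exact hs

lemma tauCL_congr {K : ℕ} {I I' : ℕ → Fin K} {i : Fin K} {t : ℕ}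
    (h : ∀ s < t, I s = I' s) : tauCL I i t = tauCL I' i t := by
  classical
  unfold tauCL
  congr 1
  apply Finset.filter_congr
  intro s hs
  rw [h s (Finset.mem_range.mp hs)]

lemma sigCL_congr {K C : ℕ} {r : Fin K → ℕ → Fin C → ℝ} {I I' : ℕ → Fin K} {i : Fin K}
    {t : ℕ} {c : Fin C} (h : ∀ s < t, I s = I' s) : sigCL r I i t c = sigCL r I' i t c := by
  classical
  unfold sigCL
  apply Finset.sum_congr
  · apply Finset.filter_congr
    intro s hs
    rw [h s (Finset.mem_range.mp hs)]
  · intros; rfl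

lemma scoreCL_congr {K C : ℕ} {T : ℕ} {r : Fin K → ℕ → Fin C → ℝ} {I I' : ℕ → Fin K}
    {t : ℕ} {c : Fin C} (h : ∀ s < t, I s = I' s) (i : Fin K) :
    scoreCL T r I t c i = scoreCL T r I' t c i := by
  unfold scoreCL
  rw [tauCL_congr h, sigCL_congr h]

/-- the abstract algorithm agrees with the rerun. -/
lemma actF_spec {K C : ℕ} (hK : 0 < K) (T : ℕ) (ctx : ℕ → Fin C)
    (ρ : Fin K → ℕ → Fin C → ℝ) (J : ℕ → Fin K)
    (hJ0 : ∀ t (ht : t < K), J t = ⟨t, ht⟩)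
    (hJarg : ∀ t, K ≤ t → t < T →
      (∀ j, scoreCL T ρ J t (ctx t) j ≤ scoreCL T ρ J t (ctx t) (J t)) ∧
      (∀ j, (∀ j', scoreCL T ρ J t (ctx t) j' ≤ scoreCL T ρ J t (ctx t) j) → J t ≤ j)) :
    ∀ t, t < T → J t = actF hK T ctx ρ t := by
  intro t
  induction t using Nat.strong_induction_on with
  | _ t ih =>
    intro htT
    rw [actF]
    by_cases htK : t < K
    · rw [dif_pos htK]
      exact hJ0 t htK
    · rw [dif_neg htK]
      push_neg at htK
      have hsc : ∀ j, scoreCL T ρ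
          (fun s => if hs : s < t then actF hK T ctx ρ s else ⟨0, hK⟩) t (ctx t) j
          = scoreCL T ρ J t (ctx t) j := by
        intro j
        apply scoreCL_congr
        intro s hs
        rw [dif_pos hs, ← ih s hs (lt_trans hs htT)]
      obtain ⟨hmax, hmin⟩ := hJarg t htK htT
      apply le_antisymm
      · apply hmin
        intro j'
        rw [← hsc j', ← hsc (leastArgmax _ _)]
        exact leastArgmax_isMax hK _ j'
      · apply leastArgmax_le
        intro j'
        rw [hsc j', hsc (J t)]
        exact hmax j'


lemma tauCL_cast_eq {K : ℕ} (I : ℕ → Fin K) (i : Fin K) (t : ℕ) :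
    ((tauCL I i t : ℕ) : ℝ) = ∑ s ∈ Finset.range t, (if I s = i then (1:ℝ) else 0) := by
  classical
  rw [tauCL, Finset.card_filter]
  push_cast
  simp [apply_ite (fun (n : ℕ) => (n : ℝ))]

lemma sigCL_eq_sum_ite {K C : ℕ} (r : Fin K → ℕ → Fin C → ℝ) (I : ℕ → Fin K) (i : Fin K)
    (t : ℕ) (c : Fin C) :
    sigCL r I i t c = ∑ s ∈ Finset.range t, (if I s = i then r i s c else 0) := by
  classical
  rw [sigCL, Finset.sum_filter]

section Meas

variable {Ω : Type} {K C : ℕ} [mΩ : MeasurableSpace Ω]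

lemma measurable_tauCL_cast (A : Ω → ℕ → Fin K) (i : Fin K) (t : ℕ)
    (hA : ∀ u, u < t → Measurable (fun ω => A ω u)) :
    Measurable (fun ω => ((tauCL (A ω) i t : ℕ) : ℝ)) := by
  classical
  have heq : (fun ω => ((tauCL (A ω) i t : ℕ) : ℝ))
      = fun ω => ∑ s ∈ Finset.range t, (if A ω s = i then (1:ℝ) else 0) := by
    funext ω; exact tauCL_cast_eq _ _ _
  rw [heq]
  apply Finset.measurable_sum
  intro s hs
  exact Measurable.ite ((hA s (Finset.mem_range.mp hs)) (measurableSet_singleton i))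
    measurable_const measurable_const

lemma measurableSet_tauCL_lt (A : Ω → ℕ → Fin K) (i : Fin K) (t n : ℕ)
    (hA : ∀ u, u < t → Measurable (fun ω => A ω u)) :
    MeasurableSet {ω | tauCL (A ω) i t < n} := by
  have h := measurable_tauCL_cast A i t hA
  have : {ω | tauCL (A ω) i t < n} = {ω | ((tauCL (A ω) i t : ℕ) : ℝ) < (n : ℝ)} := by
    ext ω; simp [Nat.cast_lt]
  rw [this]
  exact measurableSet_lt h measurable_const

lemma measurable_sigCL (r : Ω → Fin K → ℕ → Fin C → ℝ) (A : Ω → ℕ → Fin K) (i : Fin K)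
    (t : ℕ) (c : Fin C) (hA : ∀ u, u < t → Measurable (fun ω => A ω u))
    (hr : ∀ j s c', s < t → Measurable (fun ω => r ω j s c')) :
    Measurable (fun ω => sigCL (r ω) (A ω) i t c) := by
  classical
  have heq : (fun ω => sigCL (r ω) (A ω) i t c)
      = fun ω => ∑ s ∈ Finset.range t, (if A ω s = i then r ω i s c else 0) := by
    funext ω; exact sigCL_eq_sum_ite _ _ _ _ _
  rw [heq]
  apply Finset.measurable_sum
  intro s hs
  exact Measurable.ite ((hA s (Finset.mem_range.mp hs)) (measurableSet_singleton i))
    (hr i s c (Finset.mem_range.mp hs)) measurable_const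

lemma measurable_scoreCL (T : ℕ) (r : Ω → Fin K → ℕ → Fin C → ℝ) (A : Ω → ℕ → Fin K)
    (t : ℕ) (c : Fin C) (j : Fin K) (hA : ∀ u, u < t → Measurable (fun ω => A ω u))
    (hr : ∀ j' s c', s < t → Measurable (fun ω => r ω j' s c')) :
    Measurable (fun ω => scoreCL T (r ω) (A ω) t c j) := by
  unfold scoreCL
  apply Measurable.add
  · exact (measurable_sigCL r A j t c hA hr).div (measurable_tauCL_cast A j t hA)
  · exact Real.continuous_sqrt.measurable.comp
      (measurable_const.div (measurable_tauCL_cast A j t hA))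

lemma measurable_leastArgmax (hK : 0 < K) (f : Ω → Fin K → ℝ)
    (hf : ∀ j, Measurable (fun ω => f ω j)) :
    Measurable (fun ω => leastArgmax hK (f ω)) := by
  classical
  have h1 : ∀ (a b : Fin K), MeasurableSet {ω | f ω a ≤ f ω b} :=
    fun a b => measurableSet_le (hf a) (hf b)
  have key : ∀ j : Fin K, MeasurableSet ((fun ω => leastArgmax hK (f ω)) ⁻¹' {j}) := by
    intro j
    have hset : (fun ω => leastArgmax hK (f ω)) ⁻¹' {j}
        = (⋂ j', {ω | f ω j' ≤ f ω j}) ∩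
          (⋂ k : Fin K, ⋂ _h : k < j, (⋂ j', {ω | f ω j' ≤ f ω k})ᶜ) := by
      ext ω
      simp only [Set.mem_preimage, Set.mem_singleton_iff, leastArgmax_eq_iff,
        Set.mem_inter_iff, Set.mem_iInter, Set.mem_compl_iff, Set.mem_setOf_eq]
    rw [hset]
    exact ((MeasurableSet.iInter fun j' => h1 j' j)).inter
      (MeasurableSet.iInter fun k => MeasurableSet.iInter fun _ =>
        (MeasurableSet.iInter fun j' => h1 j' k).compl)
  exact measurable_to_countable (fun y => key _)

lemma measurable_actF (hK : 0 < K) (T : ℕ) (ctx : ℕ → Fin C)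
    (r : Ω → Fin K → ℕ → Fin C → ℝ) (t : ℕ)
    (hr : ∀ j s c', s < t → Measurable (fun ω => r ω j s c')) :
    ∀ s, s ≤ t → Measurable (fun ω => actF hK T ctx (r ω) s) := by
  intro s
  induction s using Nat.strong_induction_on with
  | _ s ih =>
    intro hst
    by_cases hsK : s < K
    · have heq : (fun ω => actF hK T ctx (r ω) s) = fun _ => (⟨s, hsK⟩ : Fin K) := by
        funext ω; rw [actF, dif_pos hsK]
      rw [heq]; exact measurable_const
    · have heq : (fun ω => actF hK T ctx (r ω) s)
          = fun ω => leastArgmax hK (scoreCL T (r ω)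
              (fun u => if hu : u < s then actF hK T ctx (r ω) u else ⟨0, hK⟩) s (ctx s)) := by
        funext ω; rw [actF, dif_neg hsK]
      rw [heq]
      apply measurable_leastArgmax
      intro j
      apply measurable_scoreCL
      · intro u hu
        have h1 : Measurable (fun ω => actF hK T ctx (r ω) u) :=
          ih u hu (le_trans (le_of_lt hu) hst)
        have : (fun ω => (if hu' : u < s then actF hK T ctx (r ω) u else ⟨0, hK⟩))
            = fun ω => actF hK T ctx (r ω) u := by
          funext ω; rw [dif_pos hu]
        exact this ▸ h1
      · intro j' u c' hu
        exact hr j' u c' (lt_of_lt_of_le hu hst)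

end Meas
section Dyn

lemma tauCL_mono {K : ℕ} (I : ℕ → Fin K) (i : Fin K) {s t : ℕ} (h : s ≤ t) :
    tauCL I i s ≤ tauCL I i t := by
  classical
  exact Finset.card_le_card (Finset.filter_subset_filter _ (Finset.range_subset_range.mpr h))

lemma tauCL_succ_of_pull {K : ℕ} (I : ℕ → Fin K) (i : Fin K) (s : ℕ) (h : I s = i) :
    tauCL I i (s+1) = tauCL I i s + 1 := by
  classical
  unfold tauCL
  rw [Finset.range_add_one, Finset.filter_insert, if_pos h,
    Finset.card_insert_of_notMem
      (fun hc => absurd (Finset.mem_range.mp (Finset.mem_filter.mp hc).1) (lt_irrefl s))]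

lemma tauCL_lt_of_pull {K : ℕ} (I : ℕ → Fin K) (i : Fin K) {s t : ℕ} (h : I s = i)
    (hst : s < t) : tauCL I i s < tauCL I i t := by
  have h1 : tauCL I i s < tauCL I i (s+1) := by
    rw [tauCL_succ_of_pull I i s h]; omega
  exact lt_of_lt_of_le h1 (tauCL_mono I i hst)

lemma tauCL_le_self {K : ℕ} (I : ℕ → Fin K) (i : Fin K) (t : ℕ) : tauCL I i t ≤ t := by
  classical
  calc tauCL I i t ≤ (Finset.range t).card := Finset.card_filter_le _ _
  _ = t := Finset.card_range t

lemma pullset_eq {K : ℕ} (I : ℕ → Fin K) (i : Fin K) {t T : ℕ} (htT : t ≤ T) :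
    (Finset.range T).filter (fun s => I s = i ∧ tauCL I i s < tauCL I i t)
      = (Finset.range t).filter (fun s => I s = i) := by
  classical
  ext s
  simp only [Finset.mem_filter, Finset.mem_range]
  constructor
  · rintro ⟨hsT, hIs, hlt⟩
    refine ⟨?_, hIs⟩
    by_contra hcon
    push_neg at hcon
    exact absurd (tauCL_mono I i hcon) (not_le.mpr hlt)
  · rintro ⟨hst, hIs⟩
    exact ⟨lt_of_lt_of_le hst htT, hIs, tauCL_lt_of_pull I i hIs hst⟩

lemma card_pullset_le {K : ℕ} (I : ℕ → Fin K) (i : Fin K) (n t : ℕ) :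
    ((Finset.range t).filter (fun s => I s = i ∧ tauCL I i s < n)).card ≤ n := by
  classical
  have h1 : ∀ s ∈ (Finset.range t).filter (fun s => I s = i ∧ tauCL I i s < n),
      tauCL I i s ∈ Finset.range n := by
    intro s hs
    exact Finset.mem_range.mpr (Finset.mem_filter.mp hs).2.2
  have h2 : Set.InjOn (fun s => tauCL I i s)
      ((Finset.range t).filter (fun s => I s = i ∧ tauCL I i s < n)) := by
    intro a ha b hb hab
    have ha' := Finset.mem_filter.mp (Finset.mem_coe.mp ha)
    have hb' := Finset.mem_filter.mp (Finset.mem_coe.mp hb)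
    rcases lt_trichotomy a b with h | h | h
    · exact absurd hab (ne_of_lt (tauCL_lt_of_pull I i ha'.2.1 h))
    · exact h
    · exact absurd hab.symm (ne_of_lt (tauCL_lt_of_pull I i hb'.2.1 h))
  calc ((Finset.range t).filter (fun s => I s = i ∧ tauCL I i s < n)).card
      ≤ (Finset.range n).card := Finset.card_le_card_of_injOn _ h1 h2
  _ = n := Finset.card_range n

lemma indepFun_of_measurable_comap {Ω β γ β' γ' : Type*} [MeasurableSpace Ω]
    [MeasurableSpace β] [MeasurableSpace γ] [MeasurableSpace β'] [MeasurableSpace γ']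
    {μ : MeasureTheory.Measure Ω} {f : Ω → β} {g : Ω → γ} {f' : Ω → β'} {g' : Ω → γ'}
    (h : ProbabilityTheory.IndepFun f g μ)
    (hf : Measurable[MeasurableSpace.comap f inferInstance] f')
    (hg : Measurable[MeasurableSpace.comap g inferInstance] g') :
    ProbabilityTheory.IndepFun f' g' μ := by
  have h' : ProbabilityTheory.Indep (MeasurableSpace.comap f inferInstance)
      (MeasurableSpace.comap g inferInstance) μ := h
  have h2 : ProbabilityTheory.Indep (MeasurableSpace.comap f' inferInstance)
      (MeasurableSpace.comap g' inferInstance) μ :=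
    ProbabilityTheory.indep_of_indep_of_le_right
      (ProbabilityTheory.indep_of_indep_of_le_left h' (measurable_iff_comap_le.mp hf))
      (measurable_iff_comap_le.mp hg)
  exact h2

lemma measurable_comap_eval2 {Ω D A γ : Type*} [MeasurableSpace γ] (R : Ω → D → A → γ)
    (d : D) (a : A) :
    Measurable[MeasurableSpace.comap R MeasurableSpace.pi] (fun ω => R ω d a) := by
  have h0 : Measurable[MeasurableSpace.comap R MeasurableSpace.pi] R :=
    measurable_iff_comap_le.mpr le_rfl
  have h1 : Measurable[MeasurableSpace.comap R MeasurableSpace.pi] (fun ω => R ω d) :=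
    (measurable_pi_apply d).comp h0
  exact (measurable_pi_apply a).comp h1

end Dyn
set_option maxHeartbeats 4000000 in
theorem ucb1cl_gap_regret :
    ∃ C₀ : ℝ, 0 < C₀ ∧
      ∀ (K C T : ℕ), 1 ≤ K → 1 ≤ C → K ≤ T → 2 ≤ T →
      ∀ (Δstar : ℝ), 0 < Δstar →
      ∀ (Ω : Type) (_ : MeasurableSpace Ω) (μ : Measure Ω), IsProbabilityMeasure μ →
      ∀ (r : Ω → Fin K → ℕ → Fin C → ℝ) (F : Fin K → Fin C → Measure ℝ)
        (m : Fin K → Fin C → ℝ) (ctx : ℕ → Fin C) (I : Ω → ℕ → Fin K),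
        (∀ i t c, Measurable (fun ω => r ω i t c)) →
        (∀ ω i t c, r ω i t c ∈ Set.Icc (0:ℝ) 1) →
        (∀ i c, IsProbabilityMeasure (F i c)) →
        (∀ (i : Fin K) (t : Fin T) (c : Fin C),
          Measure.map (fun ω => r ω i (t : ℕ) c) μ = F i c) →
        iIndepFun
          (fun (p : Fin K × Fin T) ω => (fun c => r ω p.1 (p.2 : ℕ) c)) μ →
        (∀ i c, ∫ x, x ∂(F i c) = m i c) →
        -- every pair (i,c) with μ_i(c) < μ*(c) has gap at least Δ*
        (∀ (i : Fin K) (c : Fin C), m i c < (⨆ j, m j c) →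
          Δstar ≤ (⨆ j, m j c) - m i c) →
        (∀ ω t (ht : t < K), I ω t = ⟨t, ht⟩) →
        (∀ ω t, K ≤ t → t < T →
          (∀ j, scoreCL T (r ω) (I ω) t (ctx t) j ≤ scoreCL T (r ω) (I ω) t (ctx t) (I ω t)) ∧
          (∀ j, (∀ j', scoreCL T (r ω) (I ω) t (ctx t) j' ≤ scoreCL T (r ω) (I ω) t (ctx t) j)
            → I ω t ≤ j)) →
        ∫ ω, (∑ t ∈ Finset.range T, ((⨆ j, m j (ctx t)) - m (I ω t) (ctx t))) ∂μ
          ≤ C₀ * K * Real.log T / Δstar := by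
  classical
  refine ⟨100, by norm_num, ?_⟩
  intro K C T hK hC hKT hT2 Δstar hΔ Ω mΩ μ hμprob r F m ctx I hrmeas hr01 hFprob hmap hindep
    hmean hgapmin hI0 hIarg
  have hK0 : 0 < K := hK
  haveI : Nonempty (Fin K) := ⟨⟨0, hK0⟩⟩
  have hT0 : 0 < T := by omega
  have hT0' : (0:ℝ) < T := by exact_mod_cast hT0
  set L : ℝ := Real.log T with hLdef
  have hL2 : Real.log 2 ≤ L := by
    rw [hLdef]
    apply Real.log_le_log (by norm_num)
    exact_mod_cast hT2
  have hlog2pos : (0:ℝ) < Real.log 2 := Real.log_pos (by norm_num)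
  have hLpos : 0 < L := lt_of_lt_of_le hlog2pos hL2
  set bonus : ℕ → ℝ := fun k => Real.sqrt (2 * L / k) with hbonusdef
  have hbonus0 : ∀ k, 0 ≤ bonus k := fun k => Real.sqrt_nonneg _
  -- the rerun algorithm
  set A : Ω → ℕ → Fin K := fun ω => actF hK0 T ctx (r ω) with hAdef
  have hIA : ∀ ω t, t < T → I ω t = A ω t := by
    intro ω t ht
    simp only [hAdef]
    exact actF_spec hK0 T ctx (r ω) (I ω) (hI0 ω) (fun t' h1 h2 => hIarg ω t' h1 h2) t ht
  -- means are in [0,1]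
  have haeF : ∀ i c, ∀ᵐ x ∂(F i c), x ∈ Set.Icc (0:ℝ) 1 := by
    intro i c
    rw [← hmap i ⟨0, hT0⟩ c]
    refine (ae_map_iff (hrmeas i ((⟨0, hT0⟩ : Fin T) : ℕ) c).aemeasurable
      measurableSet_Icc).mpr ?_
    exact Filter.Eventually.of_forall (fun ω => hr01 ω i _ c)
  have hm01 : ∀ i c, m i c ∈ Set.Icc (0:ℝ) 1 := by
    intro i c
    haveI := hFprob i c
    rw [← hmean i c]
    constructor
    · exact integral_nonneg_of_ae (by filter_upwards [haeF i c] with x hx using hx.1)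
    · have hint : Integrable (fun x : ℝ => x) (F i c) := by
        refine Integrable.mono' (integrable_const 1) measurable_id.aestronglyMeasurable ?_
        filter_upwards [haeF i c] with x hx
        rw [Real.norm_eq_abs, abs_le]
        exact ⟨by linarith [hx.1], hx.2⟩
      have := integral_mono_ae hint (integrable_const 1)
        (by filter_upwards [haeF i c] with x hx using hx.2)
      simpa using this
  have hsup : ∀ c : Fin C, ∃ istar : Fin K, (⨆ j, m j c) = m istar c ∧ ∀ j, m j c ≤ m istar c := by
    intro c
    obtain ⟨b, _, hb⟩ := Finset.exists_max_image (Finset.univ : Finset (Fin K)) (fun j => m j c)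
      ⟨⟨0, hK0⟩, Finset.mem_univ _⟩
    refine ⟨b, le_antisymm (ciSup_le (fun j => hb j (Finset.mem_univ _)))
      (le_ciSup (f := fun j : Fin K => m j c) (Set.Finite.bddAbove (Set.finite_range _)) b), fun j => hb j (Finset.mem_univ _)⟩
  have hgap01 : ∀ (i : Fin K) (c : Fin C),
      0 ≤ (⨆ j, m j c) - m i c ∧ (⨆ j, m j c) - m i c ≤ 1 := by
    intro i c
    obtain ⟨b, hb1, hb2⟩ := hsup c
    constructor
    · rw [hb1]; linarith [hb2 i]
    · rw [hb1]; linarith [(hm01 b c).2, (hm01 i c).1]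
  ------------------------------------------------------------------
  -- martingale quantities
  set Ncard : Fin K → ℕ → ℕ → Ω → ℕ := fun i n t ω =>
    ((Finset.range t).filter (fun s => A ω s = i ∧ tauCL (A ω) i s < n)).card with hNcarddef
  set Mart : Fin K → ℕ → Fin C → ℕ → Ω → ℝ := fun i n c t ω =>
    ∑ s ∈ (Finset.range t).filter (fun s => A ω s = i ∧ tauCL (A ω) i s < n),
      (r ω i s c - m i c) with hMartdef
  -- measurability pack
  have hApack : ∀ (m' : MeasurableSpace Ω) (t' : ℕ),
      (∀ (j : Fin K) (s : ℕ) (c' : Fin C), s < t' → @Measurable Ω ℝ m' _ (fun ω => r ω j s c')) →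
      ∀ s, s ≤ t' → @Measurable Ω (Fin K) m' _ (fun ω => A ω s) := by
    intro m' t' hr' s hs
    have h := measurable_actF (mΩ := m') hK0 T ctx r t' hr' s hs
    simp only [hAdef]
    exact h
  have htauset : ∀ (m' : MeasurableSpace Ω) (t' : ℕ),
      (∀ (j : Fin K) (s : ℕ) (c' : Fin C), s < t' → @Measurable Ω ℝ m' _ (fun ω => r ω j s c')) →
      ∀ (i : Fin K) (n : ℕ) (s : ℕ), s ≤ t' →
        MeasurableSet[m'] {ω | A ω s = i ∧ tauCL (A ω) i s < n} := by
    intro m' t' hr' i n s hs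
    have h1 : MeasurableSet[m'] {ω | A ω s = i} :=
      (hApack m' t' hr' s hs) (measurableSet_singleton i)
    have h2 : MeasurableSet[m'] {ω | tauCL (A ω) i s < n} :=
      measurableSet_tauCL_lt (mΩ := m') A i s n
        (fun u hu => hApack m' t' hr' u (le_trans (le_of_lt hu) hs))
    rw [Set.setOf_and]
    exact h1.inter h2
  have hMartMeasGen : ∀ (m' : MeasurableSpace Ω) (t' : ℕ),
      (∀ (j : Fin K) (s : ℕ) (c' : Fin C), s < t' → @Measurable Ω ℝ m' _ (fun ω => r ω j s c')) →
      ∀ (i : Fin K) (n : ℕ) (c : Fin C), @Measurable Ω ℝ m' _ (Mart i n c t') := by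
    intro m' t' hr' i n c
    have heq : Mart i n c t' = fun ω => ∑ s ∈ Finset.range t',
        (if (A ω s = i ∧ tauCL (A ω) i s < n) then (r ω i s c - m i c) else 0) := by
      funext ω
      simp only [hMartdef]
      exact Finset.sum_filter _ _
    rw [heq]
    apply Finset.measurable_sum
    intro s hs
    have hst' : s < t' := Finset.mem_range.mp hs
    exact Measurable.ite (htauset m' t' hr' i n s (le_of_lt hst'))
      ((hr' i s c hst').sub measurable_const) measurable_const
  have hNcardMeasGen : ∀ (m' : MeasurableSpace Ω) (t' : ℕ),
      (∀ (j : Fin K) (s : ℕ) (c' : Fin C), s < t' → @Measurable Ω ℝ m' _ (fun ω => r ω j s c')) →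
      ∀ (i : Fin K) (n : ℕ), @Measurable Ω ℝ m' _ (fun ω => (Ncard i n t' ω : ℝ)) := by
    intro m' t' hr' i n
    have heq : (fun ω => (Ncard i n t' ω : ℝ)) = fun ω => ∑ s ∈ Finset.range t',
        (if (A ω s = i ∧ tauCL (A ω) i s < n) then (1:ℝ) else 0) := by
      funext ω
      simp only [hNcarddef]
      rw [Finset.card_filter]
      push_cast
      simp [apply_ite (fun (k : ℕ) => (k : ℝ))]
    rw [heq]
    apply Finset.measurable_sum
    intro s hs
    exact Measurable.ite (htauset m' t' hr' i n s (le_of_lt (Finset.mem_range.mp hs)))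
      measurable_const measurable_const
  have hrAll : ∀ (t' : ℕ) (j : Fin K) (s : ℕ) (c' : Fin C), s < t' →
      Measurable (fun ω => r ω j s c') := fun _ j s c' _ => hrmeas j s c'
  have hMartBdd : ∀ (i : Fin K) (n : ℕ) (c : Fin C) (t' : ℕ) (ω : Ω),
      |Mart i n c t' ω| ≤ (t' : ℝ) := by
    intro i n c t' ω
    simp only [hMartdef]
    calc |∑ s ∈ (Finset.range t').filter (fun s => A ω s = i ∧ tauCL (A ω) i s < n),
          (r ω i s c - m i c)|
        ≤ ∑ s ∈ (Finset.range t').filter (fun s => A ω s = i ∧ tauCL (A ω) i s < n),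
          |r ω i s c - m i c| := Finset.abs_sum_le_sum_abs _ _
      _ ≤ ∑ s ∈ (Finset.range t').filter (fun s => A ω s = i ∧ tauCL (A ω) i s < n), 1 := by
          apply Finset.sum_le_sum
          intro s _
          have h1 := hr01 ω i s c
          have h2 := hm01 i c
          rw [abs_le]
          exact ⟨by linarith [h1.1, h2.2], by linarith [h1.2, h2.1]⟩
      _ ≤ (t' : ℝ) := by
          rw [Finset.sum_const, nsmul_eq_mul, mul_one]
          exact_mod_cast le_trans (Finset.card_filter_le _ _) (le_of_eq (Finset.card_range t'))
  ------------------------------------------------------------------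
  -- supermartingale mgf bound
  have hmgf : ∀ (i : Fin K) (n : ℕ) (c : Fin C) (l : ℝ) (t : ℕ), t ≤ T →
      ∫ ω, Real.exp (l * Mart i n c t ω - l^2 * (Ncard i n t ω : ℝ)/8) ∂μ ≤ 1 := by
    intro i n c l t
    induction t with
    | zero =>
      intro _
      have hone : ∀ ω : Ω, Real.exp (l * Mart i n c 0 ω - l^2 * (Ncard i n 0 ω : ℝ)/8) = 1 := by
        intro ω
        rw [hMartdef, hNcarddef]
        simp
      simp only [hone]
      simp
    | succ t ih =>
      intro htT1
      have htT : t < T := htT1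
      have ihT := ih (le_of_lt htT)
      set e : Ω → ℝ := fun ω => if (A ω t = i ∧ tauCL (A ω) i t < n) then (1:ℝ) else 0 with hedef
      set g : ℝ → ℝ := fun x => Real.exp (l * (x - m i c) - l^2/8) with hgdef
      set Fe : Ω → ℝ := fun ω =>
        Real.exp (l * Mart i n c t ω - l^2 * (Ncard i n t ω : ℝ)/8) with hFedef
      have hgcont : Continuous g := by
        simp only [hgdef]
        exact Real.continuous_exp.comp
          ((continuous_const.mul (continuous_id.sub continuous_const)).sub continuous_const)
      have hdecomp : ∀ ω, Real.exp (l * Mart i n c (t+1) ω - l^2 * (Ncard i n (t+1) ω : ℝ)/8)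
          = Fe ω + (Fe ω * e ω) * g (r ω i t c) - Fe ω * e ω := by
        intro ω
        by_cases hcond : (A ω t = i ∧ tauCL (A ω) i t < n)
        · have hfilter : (Finset.range (t+1)).filter
              (fun s => A ω s = i ∧ tauCL (A ω) i s < n)
              = insert t ((Finset.range t).filter (fun s => A ω s = i ∧ tauCL (A ω) i s < n)) := by
            rw [Finset.range_add_one, Finset.filter_insert, if_pos hcond]
          have hnm : t ∉ (Finset.range t).filter (fun s => A ω s = i ∧ tauCL (A ω) i s < n) :=
            fun hc => absurd (Finset.mem_range.mp (Finset.mem_filter.mp hc).1) (lt_irrefl t)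
          have hM : Mart i n c (t+1) ω = (r ω i t c - m i c) + Mart i n c t ω := by
            simp only [hMartdef]
            rw [hfilter, Finset.sum_insert hnm]
          have hN : (Ncard i n (t+1) ω : ℝ) = (Ncard i n t ω : ℝ) + 1 := by
            simp only [hNcarddef]
            rw [hfilter, Finset.card_insert_of_notMem hnm]
            push_cast
            ring
          have harg : l * ((r ω i t c - m i c) + Mart i n c t ω)
              - l^2 * ((Ncard i n t ω : ℝ) + 1)/8
              = (l * Mart i n c t ω - l^2 * (Ncard i n t ω : ℝ)/8)
                + (l * (r ω i t c - m i c) - l^2/8) := by ring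
          rw [hM, hN, harg, Real.exp_add]
          simp only [hFedef, hgdef, hedef]
          rw [if_pos hcond]
          ring
        · have hfilter : (Finset.range (t+1)).filter
              (fun s => A ω s = i ∧ tauCL (A ω) i s < n)
              = (Finset.range t).filter (fun s => A ω s = i ∧ tauCL (A ω) i s < n) := by
            rw [Finset.range_add_one, Finset.filter_insert, if_neg hcond]
          have hM : Mart i n c (t+1) ω = Mart i n c t ω := by
            simp only [hMartdef]; rw [hfilter]
          have hN : (Ncard i n (t+1) ω : ℝ) = (Ncard i n t ω : ℝ) := by
            simp only [hNcarddef]; rw [hfilter]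
          rw [hM, hN]
          simp only [hFedef, hedef]
          rw [if_neg hcond]
          ring
      -- measurability and integrability
      have hFeMeas : Measurable Fe := by
        simp only [hFedef]
        exact Real.measurable_exp.comp
          ((measurable_const.mul (hMartMeasGen mΩ t (hrAll t) i n c)).sub
            ((measurable_const.mul (hNcardMeasGen mΩ t (hrAll t) i n)).div_const 8))
      have heMeas : Measurable e := by
        simp only [hedef]
        exact Measurable.ite (htauset mΩ t (hrAll t) i n t le_rfl)
          measurable_const measurable_const
      have hFe0 : ∀ ω, 0 ≤ Fe ω := fun ω => (Real.exp_pos _).le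
      have hFeBdd : ∀ ω, Fe ω ≤ Real.exp (|l| * T) := by
        intro ω
        simp only [hFedef]
        apply Real.exp_le_exp.mpr
        have h1 : l * Mart i n c t ω ≤ |l| * T := by
          calc l * Mart i n c t ω ≤ |l * Mart i n c t ω| := le_abs_self _
            _ = |l| * |Mart i n c t ω| := abs_mul _ _
            _ ≤ |l| * T := by
                apply mul_le_mul_of_nonneg_left _ (abs_nonneg l)
                exact le_trans (hMartBdd i n c t ω) (by exact_mod_cast le_of_lt htT)
        have h2 : (0:ℝ) ≤ l^2 * (Ncard i n t ω : ℝ)/8 := by positivity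
        linarith
      have he01 : ∀ ω, 0 ≤ e ω ∧ e ω ≤ 1 := by
        intro ω
        simp only [hedef]
        split <;> norm_num
      have hFeInt : Integrable Fe μ := by
        refine Integrable.mono' (integrable_const (Real.exp (|l| * T)))
          hFeMeas.aestronglyMeasurable (ae_of_all _ (fun ω => ?_))
        rw [Real.norm_eq_abs, abs_of_nonneg (hFe0 ω)]
        exact hFeBdd ω
      have hFeeBdd : ∀ ω, |Fe ω * e ω| ≤ Real.exp (|l| * T) := by
        intro ω
        rw [abs_mul, abs_of_nonneg (hFe0 ω), abs_of_nonneg (he01 ω).1]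
        calc Fe ω * e ω ≤ Fe ω * 1 := mul_le_mul_of_nonneg_left (he01 ω).2 (hFe0 ω)
          _ = Fe ω := mul_one _
          _ ≤ Real.exp (|l| * T) := hFeBdd ω
      have hFeeInt : Integrable (fun ω => Fe ω * e ω) μ := by
        refine Integrable.mono' (integrable_const (Real.exp (|l| * T)))
          (hFeMeas.mul heMeas).aestronglyMeasurable (ae_of_all _ (fun ω => ?_))
        rw [Real.norm_eq_abs]
        exact hFeeBdd ω
      have hgXMeas : Measurable (fun ω => g (r ω i t c)) :=
        hgcont.measurable.comp (hrmeas i t c)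
      have hgXBdd : ∀ ω, |g (r ω i t c)| ≤ Real.exp |l| := by
        intro ω
        simp only [hgdef]
        rw [abs_of_pos (Real.exp_pos _)]
        apply Real.exp_le_exp.mpr
        have h1 := hr01 ω i t c
        have h2 := hm01 i c
        have h3 : l * (r ω i t c - m i c) ≤ |l| := by
          calc l * (r ω i t c - m i c) ≤ |l * (r ω i t c - m i c)| := le_abs_self _
            _ = |l| * |r ω i t c - m i c| := abs_mul _ _
            _ ≤ |l| * 1 := by
                apply mul_le_mul_of_nonneg_left _ (abs_nonneg l)
                rw [abs_le]
                exact ⟨by linarith [h1.1, h2.2], by linarith [h1.2, h2.1]⟩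
            _ = |l| := mul_one _
        have h4 : (0:ℝ) ≤ l^2/8 := by positivity
        linarith
      have hgXInt : Integrable (fun ω => g (r ω i t c)) μ := by
        refine Integrable.mono' (integrable_const (Real.exp |l|))
          hgXMeas.aestronglyMeasurable (ae_of_all _ (fun ω => ?_))
        rw [Real.norm_eq_abs]
        exact hgXBdd ω
      have hprodInt : Integrable (fun ω => (Fe ω * e ω) * g (r ω i t c)) μ := by
        refine Integrable.mono' (integrable_const (Real.exp (|l| * T) * Real.exp |l|))
          (((hFeMeas.mul heMeas).mul hgXMeas)).aestronglyMeasurable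
          (ae_of_all _ (fun ω => ?_))
        rw [Real.norm_eq_abs, abs_mul]
        exact mul_le_mul (hFeeBdd ω) (hgXBdd ω) (abs_nonneg _) (Real.exp_pos _).le
      -- independence
      have hXmeasAll : ∀ p : Fin K × Fin T,
          Measurable (fun ω => (fun c' => r ω p.1 (p.2 : ℕ) c')) :=
        fun p => measurable_pi_lambda _ (fun c' => hrmeas p.1 p.2 c')
      have hq0mem : ((i, ⟨t, htT⟩) : Fin K × Fin T)
          ∉ Finset.univ.filter (fun p : Fin K × Fin T => (p.2 : ℕ) < t) := by
        simp
      have hdisj : Disjoint (Finset.univ.filter (fun p : Fin K × Fin T => (p.2 : ℕ) < t))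
          ({(i, (⟨t, htT⟩ : Fin T))} : Finset (Fin K × Fin T)) := by
        rw [Finset.disjoint_singleton_right]
        exact hq0mem
      have hbase := hindep.indepFun_finset
        (Finset.univ.filter (fun p : Fin K × Fin T => (p.2 : ℕ) < t))
        ({(i, (⟨t, htT⟩ : Fin T))} : Finset (Fin K × Fin T)) hdisj hXmeasAll
      have hstep_indep : IndepFun (fun ω => Fe ω * e ω) (fun ω => g (r ω i t c)) μ := by
        refine indepFun_of_measurable_comap hbase ?_ ?_
        · -- past-measurable
          have hcoord : ∀ (j : Fin K) (s : ℕ) (c' : Fin C), s < t →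
              Measurable[MeasurableSpace.comap
                (fun a (q : {x // x ∈ Finset.univ.filter
                    (fun p : Fin K × Fin T => (p.2 : ℕ) < t)}) =>
                  (fun c'' => r a (q : Fin K × Fin T).1 (((q : Fin K × Fin T).2 : ℕ)) c''))
                inferInstance] (fun ω => r ω j s c') := by
            intro j s c' hst
            have hmem : ((j, ⟨s, lt_trans hst htT⟩) : Fin K × Fin T)
                ∈ Finset.univ.filter (fun p : Fin K × Fin T => (p.2 : ℕ) < t) := by
              simp [hst]
            exact measurable_comap_eval2 _
              (⟨(j, ⟨s, lt_trans hst htT⟩), hmem⟩ : {x // x ∈ Finset.univ.filter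
                (fun p : Fin K × Fin T => (p.2 : ℕ) < t)}) c'
          refine Measurable.mul ?_ ?_
          · simp only [hFedef]
            exact Real.measurable_exp.comp
              ((measurable_const.mul (hMartMeasGen _ t hcoord i n c)).sub
                ((measurable_const.mul (hNcardMeasGen _ t hcoord i n)).div_const 8))
          · simp only [hedef]
            exact Measurable.ite (htauset _ t hcoord i n t le_rfl)
              measurable_const measurable_const
        · -- present-measurable
          have hco : Measurable[MeasurableSpace.comap
              (fun a (q : {x // x ∈ ({(i, (⟨t, htT⟩ : Fin T))} : Finset (Fin K × Fin T))}) =>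
                (fun c'' => r a (q : Fin K × Fin T).1 (((q : Fin K × Fin T).2 : ℕ)) c''))
              inferInstance] (fun ω => r ω i t c) :=
            measurable_comap_eval2 _
              (⟨(i, ⟨t, htT⟩), Finset.mem_singleton_self _⟩ :
                {x // x ∈ ({(i, (⟨t, htT⟩ : Fin T))} : Finset (Fin K × Fin T))}) c
          exact hgcont.measurable.comp hco
      have hprodEq : ∫ ω, (Fe ω * e ω) * g (r ω i t c) ∂μ
          = (∫ ω, Fe ω * e ω ∂μ) * ∫ ω, g (r ω i t c) ∂μ :=
        hstep_indep.integral_mul_eq_mul_integral hFeeInt.aestronglyMeasurable hgXInt.aestronglyMeasurable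
      -- the Hoeffding bound
      have hgint_le : ∫ ω, g (r ω i t c) ∂μ ≤ 1 := by
        haveI := hFprob i c
        have h0 : ∫ x, g x ∂(F i c) = ∫ ω, g (r ω i t c) ∂μ := by
          rw [← hmap i ⟨t, htT⟩ c]
          exact integral_map (hrmeas i ((⟨t, htT⟩ : Fin T) : ℕ) c).aemeasurable
            hgcont.aestronglyMeasurable
        rw [← h0]
        have hsplit : ∀ x : ℝ, g x = Real.exp (l * (x - m i c)) * Real.exp (-(l^2/8)) := by
          intro x
          simp only [hgdef]
          rw [← Real.exp_add]
          ring_nf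
        calc ∫ x, g x ∂(F i c)
            = ∫ x, Real.exp (l * (x - m i c)) * Real.exp (-(l^2/8)) ∂(F i c) := by
              simp_rw [hsplit]
          _ = (∫ x, Real.exp (l * (x - m i c)) ∂(F i c)) * Real.exp (-(l^2/8)) :=
              integral_mul_const _ _
          _ ≤ Real.exp (l^2/8) * Real.exp (-(l^2/8)) := by
              apply mul_le_mul_of_nonneg_right _ (Real.exp_pos _).le
              have hh := hoeff_mgf (F i c) (haeF i c) l
              rw [hmean i c] at hh
              exact hh
          _ = 1 := by rw [← Real.exp_add]; simp
      have hFee_nonneg : 0 ≤ ∫ ω, Fe ω * e ω ∂μ :=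
        integral_nonneg (fun ω => mul_nonneg (hFe0 ω) (he01 ω).1)
      calc ∫ ω, Real.exp (l * Mart i n c (t+1) ω - l^2 * (Ncard i n (t+1) ω : ℝ)/8) ∂μ
          = ∫ ω, (Fe ω + (Fe ω * e ω) * g (r ω i t c) - Fe ω * e ω) ∂μ :=
            integral_congr_ae (ae_of_all _ hdecomp)
        _ = (∫ ω, (Fe ω + (Fe ω * e ω) * g (r ω i t c)) ∂μ) - ∫ ω, Fe ω * e ω ∂μ :=
            integral_sub (hFeInt.add hprodInt) hFeeInt
        _ = ((∫ ω, Fe ω ∂μ) + ∫ ω, (Fe ω * e ω) * g (r ω i t c) ∂μ) - ∫ ω, Fe ω * e ω ∂μ := by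
            rw [integral_add hFeInt hprodInt]
        _ = ((∫ ω, Fe ω ∂μ) + (∫ ω, Fe ω * e ω ∂μ) * ∫ ω, g (r ω i t c) ∂μ)
              - ∫ ω, Fe ω * e ω ∂μ := by rw [hprodEq]
        _ ≤ ((∫ ω, Fe ω ∂μ) + (∫ ω, Fe ω * e ω ∂μ) * 1) - ∫ ω, Fe ω * e ω ∂μ := by
            have := mul_le_mul_of_nonneg_left hgint_le hFee_nonneg
            linarith
        _ = ∫ ω, Fe ω ∂μ := by ring
        _ ≤ 1 := ihT
  ------------------------------------------------------------------
  -- tail bounds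
  have hMartTMeas : ∀ (i : Fin K) (n : ℕ) (c : Fin C), Measurable (Mart i n c T) :=
    fun i n c => hMartMeasGen mΩ T (hrAll T) i n c
  have hNcardle : ∀ (i : Fin K) (n : ℕ) (ω : Ω), (Ncard i n T ω : ℝ) ≤ (n : ℝ) := by
    intro i n ω
    simp only [hNcarddef]
    exact_mod_cast card_pullset_le (A ω) i n T
  have hexpMartInt : ∀ (i : Fin K) (n : ℕ) (c : Fin C) (l : ℝ),
      Integrable (fun ω => Real.exp (l * Mart i n c T ω)) μ := by
    intro i n c l
    refine Integrable.mono' (integrable_const (Real.exp (|l| * T)))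
      (Real.measurable_exp.comp (measurable_const.mul (hMartTMeas i n c))).aestronglyMeasurable
      (ae_of_all _ (fun ω => ?_))
    rw [Real.norm_eq_abs, abs_of_pos (Real.exp_pos _)]
    apply Real.exp_le_exp.mpr
    calc l * Mart i n c T ω ≤ |l * Mart i n c T ω| := le_abs_self _
      _ = |l| * |Mart i n c T ω| := abs_mul _ _
      _ ≤ |l| * T := mul_le_mul_of_nonneg_left (hMartBdd i n c T ω) (abs_nonneg l)
  have hmgfT : ∀ (i : Fin K) (n : ℕ) (c : Fin C) (l : ℝ), 0 < n →
      l^2 = 4 * (bonus n)^2 → ∫ ω, Real.exp (l * Mart i n c T ω) ∂μ ≤ Real.exp L := by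
    intro i n c l hn hl
    have hn0 : (0:ℝ) < n := by exact_mod_cast hn
    have hb2 : (bonus n)^2 = 2 * L / n := by
      simp only [hbonusdef]
      exact Real.sq_sqrt (by positivity)
    have step1 : ∀ ω, Real.exp (l * Mart i n c T ω)
        ≤ Real.exp (l * Mart i n c T ω - l^2 * (Ncard i n T ω : ℝ)/8)
          * Real.exp (l^2 * n / 8) := by
      intro ω
      rw [← Real.exp_add]
      apply Real.exp_le_exp.mpr
      have h1 := mul_le_mul_of_nonneg_left (hNcardle i n ω) (sq_nonneg l)
      linarith
    have hint2 : Integrable (fun ω =>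
        Real.exp (l * Mart i n c T ω - l^2 * (Ncard i n T ω : ℝ)/8)
          * Real.exp (l^2 * n / 8)) μ := by
      apply Integrable.mul_const
      refine Integrable.mono' (integrable_const (Real.exp (|l| * T)))
        (Real.measurable_exp.comp ((measurable_const.mul (hMartTMeas i n c)).sub
          ((measurable_const.mul (hNcardMeasGen mΩ T (hrAll T) i n)).div_const 8))).aestronglyMeasurable
        (ae_of_all _ (fun ω => ?_))
      rw [Real.norm_eq_abs, abs_of_pos (Real.exp_pos _)]
      apply Real.exp_le_exp.mpr
      have h1 : l * Mart i n c T ω ≤ |l| * T := by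
        calc l * Mart i n c T ω ≤ |l * Mart i n c T ω| := le_abs_self _
          _ = |l| * |Mart i n c T ω| := abs_mul _ _
          _ ≤ |l| * T := mul_le_mul_of_nonneg_left (hMartBdd i n c T ω) (abs_nonneg l)
      have h2 : (0:ℝ) ≤ l^2 * (Ncard i n T ω : ℝ)/8 := by positivity
      linarith
    calc ∫ ω, Real.exp (l * Mart i n c T ω) ∂μ
        ≤ ∫ ω, Real.exp (l * Mart i n c T ω - l^2 * (Ncard i n T ω : ℝ)/8)
            * Real.exp (l^2 * n / 8) ∂μ :=
          integral_mono (hexpMartInt i n c l) hint2 step1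
      _ = (∫ ω, Real.exp (l * Mart i n c T ω - l^2 * (Ncard i n T ω : ℝ)/8) ∂μ)
            * Real.exp (l^2 * n / 8) := integral_mul_const _ _
      _ ≤ 1 * Real.exp (l^2 * n / 8) :=
          mul_le_mul_of_nonneg_right (hmgf i n c l T le_rfl) (Real.exp_pos _).le
      _ = Real.exp L := by
          rw [one_mul]
          congr 1
          rw [hl, hb2]
          field_simp
          ring
  have hTail : ∀ (i : Fin K) (n : ℕ), 1 ≤ n → ∀ c : Fin C,
      (μ {ω | (n:ℝ) * bonus n ≤ Mart i n c T ω}).toReal ≤ Real.exp (-(3*L)) ∧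
      (μ {ω | Mart i n c T ω ≤ -((n:ℝ) * bonus n)}).toReal ≤ Real.exp (-(3*L)) := by
    intro i n hn c
    have hn0 : (0:ℝ) < n := by exact_mod_cast hn
    have hb0 : 0 ≤ bonus n := hbonus0 n
    have hb2 : (bonus n)^2 = 2 * L / n := by
      simp only [hbonusdef]
      exact Real.sq_sqrt (by positivity)
    have hnb2 : (n:ℝ) * (bonus n)^2 = 2 * L := by
      rw [hb2]
      field_simp
    have harith : -(2 * bonus n) * ((n:ℝ) * bonus n) + L = -(3*L) := by
      nlinarith [hnb2]
    constructor
    · have hup := measure_ge_le_exp_mul_mgf (μ := μ) (X := Mart i n c T) ((n:ℝ) * bonus n)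
        (by positivity : (0:ℝ) ≤ 2 * bonus n) (hexpMartInt i n c (2 * bonus n))
      calc (μ {ω | (n:ℝ) * bonus n ≤ Mart i n c T ω}).toReal
          ≤ Real.exp (-(2 * bonus n) * ((n:ℝ) * bonus n)) * mgf (Mart i n c T) μ (2 * bonus n) :=
            hup
        _ ≤ Real.exp (-(2 * bonus n) * ((n:ℝ) * bonus n)) * Real.exp L := by
            apply mul_le_mul_of_nonneg_left _ (Real.exp_pos _).le
            simp only [mgf]
            exact hmgfT i n c (2 * bonus n) hn (by ring)
        _ = Real.exp (-(3*L)) := by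
            rw [← Real.exp_add, harith]
    · have hlow := measure_le_le_exp_mul_mgf (μ := μ) (X := Mart i n c T) (-((n:ℝ) * bonus n))
        (by simp; positivity : -(2 * bonus n) ≤ 0) (hexpMartInt i n c (-(2 * bonus n)))
      calc (μ {ω | Mart i n c T ω ≤ -((n:ℝ) * bonus n)}).toReal
          ≤ Real.exp (-(-(2 * bonus n)) * (-((n:ℝ) * bonus n)))
              * mgf (Mart i n c T) μ (-(2 * bonus n)) := hlow
        _ ≤ Real.exp (-(-(2 * bonus n)) * (-((n:ℝ) * bonus n))) * Real.exp L := by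
            apply mul_le_mul_of_nonneg_left _ (Real.exp_pos _).le
            simp only [mgf]
            exact hmgfT i n c (-(2 * bonus n)) hn (by ring)
        _ = Real.exp (-(3*L)) := by
            rw [← Real.exp_add]
            congr 1
            nlinarith [hnb2]
  ------------------------------------------------------------------
  -- the bad event
  set bigFin : Finset (Fin K × ℕ × ℕ) :=
    Finset.univ ×ˢ (Finset.Icc 1 T ×ˢ Finset.range T) with hbigFindef
  set Eset : Fin K × ℕ × ℕ → Set Ω := fun p =>
    {ω | (p.2.1 : ℝ) * bonus p.2.1 < |Mart p.1 p.2.1 (ctx p.2.2) T ω|} with hEsetdef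
  set B : Set Ω := ⋃ p ∈ bigFin, Eset p with hBdef
  have hEmeas : ∀ p, MeasurableSet (Eset p) := by
    intro p
    simp only [hEsetdef]
    exact measurableSet_lt measurable_const (hMartTMeas _ _ _).abs
  have hBmeas : MeasurableSet B := by
    simp only [hBdef]
    exact Finset.measurableSet_biUnion _ (fun p _ => hEmeas p)
  have hEbound : ∀ p ∈ bigFin, (μ (Eset p)).toReal ≤ 2 * Real.exp (-(3*L)) := by
    rintro ⟨i, n, t⟩ hp
    simp only [hbigFindef] at hp
    simp only [Finset.mem_product, Finset.mem_univ, Finset.mem_Icc, Finset.mem_range,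
      true_and] at hp
    obtain ⟨⟨hn1, _⟩, _⟩ := hp
    have hsub : Eset (i, n, t) ⊆ {ω | (n:ℝ) * bonus n ≤ Mart i n (ctx t) T ω}
        ∪ {ω | Mart i n (ctx t) T ω ≤ -((n:ℝ) * bonus n)} := by
      intro ω hω
      simp only [hEsetdef] at hω
      simp only [Set.mem_setOf_eq] at hω
      rcases le_total 0 (Mart i n (ctx t) T ω) with h | h
      · left
        rw [Set.mem_setOf_eq]
        rw [abs_of_nonneg h] at hω
        exact le_of_lt hω
      · right
        rw [Set.mem_setOf_eq]
        rw [abs_of_nonpos h] at hω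
        linarith
    obtain ⟨hu, hl⟩ := hTail i n hn1 (ctx t)
    have h1 : μ (Eset (i, n, t)) ≤ μ {ω | (n:ℝ) * bonus n ≤ Mart i n (ctx t) T ω}
        + μ {ω | Mart i n (ctx t) T ω ≤ -((n:ℝ) * bonus n)} :=
      le_trans (measure_mono hsub) (measure_union_le _ _)
    have h2 : (μ (Eset (i, n, t))).toReal
        ≤ (μ {ω | (n:ℝ) * bonus n ≤ Mart i n (ctx t) T ω}).toReal
          + (μ {ω | Mart i n (ctx t) T ω ≤ -((n:ℝ) * bonus n)}).toReal := by
      have h3 := ENNReal.toReal_mono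
        (ENNReal.add_ne_top.mpr ⟨measure_ne_top _ _, measure_ne_top _ _⟩) h1
      rwa [ENNReal.toReal_add (measure_ne_top _ _) (measure_ne_top _ _)] at h3
    linarith
  have hμB : (μ B).toReal ≤ (K : ℝ) * T * T * (2 * Real.exp (-(3*L))) := by
    have hsub : μ B ≤ ∑ p ∈ bigFin, μ (Eset p) := by
      simp only [hBdef]
      exact measure_biUnion_finset_le _ _
    have hne : (∑ p ∈ bigFin, μ (Eset p)) ≠ ⊤ :=
      (ENNReal.sum_lt_top.mpr (fun p _ => measure_lt_top _ _)).ne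
    calc (μ B).toReal ≤ (∑ p ∈ bigFin, μ (Eset p)).toReal := ENNReal.toReal_mono hne hsub
      _ = ∑ p ∈ bigFin, (μ (Eset p)).toReal := ENNReal.toReal_sum (fun p _ => measure_ne_top _ _)
      _ ≤ ∑ _p ∈ bigFin, (2 * Real.exp (-(3*L))) := Finset.sum_le_sum hEbound
      _ = (bigFin.card : ℝ) * (2 * Real.exp (-(3*L))) := by
          rw [Finset.sum_const, nsmul_eq_mul]
      _ = (K : ℝ) * T * T * (2 * Real.exp (-(3*L))) := by
          rw [hbigFindef, Finset.card_product, Finset.card_product, Finset.card_univ,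
            Fintype.card_fin, Nat.card_Icc, Finset.card_range]
          push_cast
          ring_nf
  ------------------------------------------------------------------
  -- clean-event deterministic analysis
  have hkey2 : ∀ ω, ω ∉ B → ∀ (i : Fin K) (t : ℕ), K ≤ t → t < T → I ω t = i →
      ((⨆ j, m j (ctx t)) - m i (ctx t)) ≤ 2 * bonus (tauCL (I ω) i t)
      ∧ 1 ≤ tauCL (I ω) i t := by
    intro ω hωB i t hKt htT hIt
    have hGood : ∀ (j : Fin K) (n' : ℕ), 1 ≤ n' → n' ≤ T →
        |Mart j n' (ctx t) T ω| ≤ (n' : ℝ) * bonus n' := by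
      intro j n' h1 h2
      by_contra hcon
      push_neg at hcon
      apply hωB
      simp only [hBdef]
      refine Set.mem_biUnion (show ((j, n', t) : Fin K × ℕ × ℕ) ∈ bigFin from ?_) ?_
      · simp only [hbigFindef]
        simp only [Finset.mem_product, Finset.mem_univ, Finset.mem_Icc, Finset.mem_range,
          true_and]
        exact ⟨⟨h1, h2⟩, htT⟩
      · simp only [hEsetdef]
        exact hcon
    have htauAI : ∀ (j : Fin K) (s : ℕ), s ≤ T → tauCL (A ω) j s = tauCL (I ω) j s := by
      intro j s hs
      exact tauCL_congr (fun u hu => (hIA ω u (lt_of_lt_of_le hu hs)).symm)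
    have hMartEq : ∀ (j : Fin K), Mart j (tauCL (I ω) j t) (ctx t) T ω
        = sigCL (r ω) (I ω) j t (ctx t) - (tauCL (I ω) j t : ℝ) * m j (ctx t) := by
      intro j
      have hfeq : (Finset.range T).filter
          (fun s => A ω s = j ∧ tauCL (A ω) j s < tauCL (I ω) j t)
          = (Finset.range T).filter
            (fun s => I ω s = j ∧ tauCL (I ω) j s < tauCL (I ω) j t) := by
        apply Finset.filter_congr
        intro s hs
        have hsT := Finset.mem_range.mp hs
        rw [← hIA ω s hsT, htauAI j s (le_of_lt hsT)]
      simp only [hMartdef]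
      rw [hfeq, pullset_eq (I ω) j (le_of_lt htT), Finset.sum_sub_distrib,
        Finset.sum_const, nsmul_eq_mul]
      rfl
    have hpull1 : ∀ j : Fin K, 1 ≤ tauCL (I ω) j t := by
      intro j
      have hjt : (j : ℕ) < t := lt_of_lt_of_le j.isLt hKt
      have hmem : (j : ℕ) ∈ (Finset.range t).filter (fun s => I ω s = j) := by
        rw [Finset.mem_filter, Finset.mem_range]
        refine ⟨hjt, ?_⟩
        rw [hI0 ω j j.isLt]
      have : 0 < tauCL (I ω) j t := by
        rw [tauCL]
        exact Finset.card_pos.mpr ⟨_, hmem⟩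
      omega
    have htle : ∀ j : Fin K, tauCL (I ω) j t ≤ T :=
      fun j => le_trans (tauCL_le_self _ _ _) (le_of_lt htT)
    obtain ⟨istar, hsup1, hsup2⟩ := hsup (ctx t)
    have hgood_i := hGood i (tauCL (I ω) i t) (hpull1 i) (htle i)
    have hgood_s := hGood istar (tauCL (I ω) istar t) (hpull1 istar) (htle istar)
    rw [hMartEq i] at hgood_i
    rw [hMartEq istar] at hgood_s
    have hni0 : (0:ℝ) < (tauCL (I ω) i t : ℝ) := by exact_mod_cast hpull1 i
    have hns0 : (0:ℝ) < (tauCL (I ω) istar t : ℝ) := by exact_mod_cast hpull1 istar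
    have hscdef : ∀ j : Fin K, scoreCL T (r ω) (I ω) t (ctx t) j
        = sigCL (r ω) (I ω) j t (ctx t) / (tauCL (I ω) j t : ℝ)
          + bonus (tauCL (I ω) j t) := fun j => rfl
    have hsc := (hIarg ω t hKt htT).1 istar
    rw [hIt] at hsc
    have hscore_star : m istar (ctx t) ≤ scoreCL T (r ω) (I ω) t (ctx t) istar := by
      rw [hscdef istar]
      have habs := (abs_le.mp hgood_s).1
      have h2 : m istar (ctx t) - bonus (tauCL (I ω) istar t)
          ≤ sigCL (r ω) (I ω) istar t (ctx t) / (tauCL (I ω) istar t : ℝ) := by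
        rw [le_div_iff₀ hns0]
        nlinarith [habs]
      linarith
    have hscore_i : scoreCL T (r ω) (I ω) t (ctx t) i
        ≤ m i (ctx t) + 2 * bonus (tauCL (I ω) i t) := by
      rw [hscdef i]
      have habs := (abs_le.mp hgood_i).2
      have h2 : sigCL (r ω) (I ω) i t (ctx t) / (tauCL (I ω) i t : ℝ)
          ≤ m i (ctx t) + bonus (tauCL (I ω) i t) := by
        rw [div_le_iff₀ hni0]
        nlinarith [habs]
      linarith
    constructor
    · rw [hsup1]
      linarith
    · exact hpull1 i
  -- the pointwise clean bound
  have hclean : ∀ ω, ω ∉ B →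
      (∑ t ∈ Finset.range T, ((⨆ j, m j (ctx t)) - m (I ω t) (ctx t)))
        ≤ K + 16*K*L/Δstar := by
    intro ω hωB
    have hsplit : Finset.range T = Finset.range K ∪ Finset.Ico K T := by
      rw [Finset.range_eq_Ico, Finset.range_eq_Ico]
      exact (Finset.Ico_union_Ico_eq_Ico (Nat.zero_le K) hKT).symm
    have hdisj2 : Disjoint (Finset.range K) (Finset.Ico K T) := by
      rw [Finset.range_eq_Ico]
      exact Finset.Ico_disjoint_Ico_consecutive 0 K T
    rw [hsplit, Finset.sum_union hdisj2]
    have hpart1 : ∑ t ∈ Finset.range K, ((⨆ j, m j (ctx t)) - m (I ω t) (ctx t)) ≤ K := by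
      calc ∑ t ∈ Finset.range K, ((⨆ j, m j (ctx t)) - m (I ω t) (ctx t))
          ≤ ∑ _t ∈ Finset.range K, (1:ℝ) :=
            Finset.sum_le_sum (fun t _ => (hgap01 (I ω t) (ctx t)).2)
        _ = K := by simp
    have hpart2 : ∑ t ∈ Finset.Ico K T, ((⨆ j, m j (ctx t)) - m (I ω t) (ctx t))
        ≤ 16*K*L/Δstar := by
      set gp : ℕ → ℝ := fun t => (⨆ j, m j (ctx t)) - m (I ω t) (ctx t) with hgpdef
      set S0 : Finset ℕ := (Finset.Ico K T).filter (fun t => 0 < gp t) with hS0def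
      have h0 : ∑ t ∈ Finset.Ico K T, gp t = ∑ t ∈ S0, gp t := by
        rw [← Finset.sum_filter_add_sum_filter_not (Finset.Ico K T) (fun t => 0 < gp t) gp]
        rw [show ((Finset.Ico K T).filter (fun t => ¬ 0 < gp t)).sum gp = 0 from
          Finset.sum_eq_zero (fun t ht => ?_), add_zero]
        · have hmem := Finset.mem_filter.mp ht
          have h1 := (hgap01 (I ω t) (ctx t)).1
          have h2 := hmem.2
          push_neg at h2
          exact le_antisymm h2 h1
      rw [h0]
      rw [← Finset.sum_fiberwise_of_maps_to (g := fun t => I ω t) (t := Finset.univ)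
        (fun t _ => Finset.mem_univ _) gp]
      have hfiber : ∀ i : Fin K, ∑ t ∈ S0.filter (fun t => I ω t = i), gp t
          ≤ 16*L/Δstar := by
        intro i
        have hmemfacts : ∀ t ∈ S0.filter (fun t => I ω t = i),
            K ≤ t ∧ t < T ∧ I ω t = i ∧ 0 < gp t := by
          intro t ht
          have h1 := Finset.mem_filter.mp ht
          have h2 := Finset.mem_filter.mp h1.1
          have h3 := Finset.mem_Ico.mp h2.1
          exact ⟨h3.1, h3.2, h1.2, h2.2⟩
        have hbnd : ∀ t ∈ S0.filter (fun t => I ω t = i),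
            gp t ≤ 2 * bonus (tauCL (I ω) i t) := by
          intro t ht
          obtain ⟨hKt, htT, hIt, _⟩ := hmemfacts t ht
          have := (hkey2 ω hωB i t hKt htT hIt).1
          simp only [hgpdef]
          rw [hIt]
          exact this
        set NN : ℕ := Nat.floor (8*L/Δstar^2) with hNNdef
        have hnrange : ∀ t ∈ S0.filter (fun t => I ω t = i),
            tauCL (I ω) i t ∈ Finset.Icc 1 NN := by
          intro t ht
          obtain ⟨hKt, htT, hIt, hgp⟩ := hmemfacts t ht
          obtain ⟨hb, h1⟩ := hkey2 ω hωB i t hKt htT hIt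
          rw [Finset.mem_Icc]
          refine ⟨h1, ?_⟩
          have hn0 : (0:ℝ) < (tauCL (I ω) i t : ℝ) := by exact_mod_cast h1
          have hΔle : Δstar ≤ (⨆ j, m j (ctx t)) - m i (ctx t) := by
            apply hgapmin
            have : 0 < (⨆ j, m j (ctx t)) - m i (ctx t) := by
              simp only [hgpdef] at hgp
              rw [hIt] at hgp
              exact hgp
            linarith
          have hΔ2b : Δstar ≤ 2 * bonus (tauCL (I ω) i t) := le_trans hΔle hb
          have hsq : (bonus (tauCL (I ω) i t))^2 = 2*L/(tauCL (I ω) i t : ℝ) := by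
            simp only [hbonusdef]
            exact Real.sq_sqrt (by positivity)
          have hb0' : 0 ≤ bonus (tauCL (I ω) i t) := hbonus0 _
          have hΔsq : Δstar^2 ≤ 4 * (2*L/(tauCL (I ω) i t : ℝ)) := by
            nlinarith [hΔ2b, hΔ, hb0']
          have hreal : (tauCL (I ω) i t : ℝ) ≤ 8*L/Δstar^2 := by
            rw [le_div_iff₀ (by positivity)]
            have h5 := mul_le_mul_of_nonneg_right hΔsq (le_of_lt hn0)
            have h6 : 4*(2*L/(tauCL (I ω) i t : ℝ)) * (tauCL (I ω) i t : ℝ) = 8*L := by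
              field_simp
              ring
            nlinarith [h5, h6]
          exact Nat.le_floor hreal
        have hinj : Set.InjOn (fun t => tauCL (I ω) i t)
            (S0.filter (fun t => I ω t = i)) := by
          intro a ha b hb hab
          have ha' := hmemfacts a (Finset.mem_coe.mp ha)
          have hb' := hmemfacts b (Finset.mem_coe.mp hb)
          rcases lt_trichotomy a b with h | h | h
          · exact absurd hab (ne_of_lt (tauCL_lt_of_pull (I ω) i ha'.2.2.1 h))
          · exact h
          · exact absurd hab.symm (ne_of_lt (tauCL_lt_of_pull (I ω) i hb'.2.2.1 h))
        calc ∑ t ∈ S0.filter (fun t => I ω t = i), gp t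
            ≤ ∑ t ∈ S0.filter (fun t => I ω t = i), 2 * bonus (tauCL (I ω) i t) :=
              Finset.sum_le_sum hbnd
          _ = ∑ k ∈ (S0.filter (fun t => I ω t = i)).image (fun t => tauCL (I ω) i t),
              2 * bonus k := by
              rw [Finset.sum_image (fun x hx y hy h => hinj hx hy h)]
          _ ≤ ∑ k ∈ Finset.Icc 1 NN, 2 * bonus k := by
              apply Finset.sum_le_sum_of_subset_of_nonneg
              · rw [Finset.image_subset_iff]
                exact hnrange
              · intro k _ _
                have := hbonus0 k
                linarith
          _ = 2 * Real.sqrt (2*L) * ∑ k ∈ Finset.Icc 1 NN, (1 / Real.sqrt k) := by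
              rw [Finset.mul_sum]
              apply Finset.sum_congr rfl
              intro k _
              simp only [hbonusdef]
              rw [Real.sqrt_div (by positivity) (k:ℝ)]
              ring
          _ ≤ 2 * Real.sqrt (2*L) * (2 * Real.sqrt NN) := by
              apply mul_le_mul_of_nonneg_left (sum_inv_sqrt_le NN) (by positivity)
          _ ≤ 16*L/Δstar := by
              have hNle : (NN:ℝ) ≤ 8*L/Δstar^2 := Nat.floor_le (by positivity)
              have h1 : Real.sqrt NN ≤ Real.sqrt (8*L/Δstar^2) := Real.sqrt_le_sqrt hNle
              have h2 : 2 * Real.sqrt (2*L) * (2 * Real.sqrt NN)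
                  ≤ 4 * (Real.sqrt (2*L) * Real.sqrt (8*L/Δstar^2)) := by
                nlinarith [Real.sqrt_nonneg (2*L), Real.sqrt_nonneg (NN:ℝ), h1]
              have h3 : Real.sqrt (2*L) * Real.sqrt (8*L/Δstar^2)
                  = Real.sqrt ((2*L) * (8*L/Δstar^2)) :=
                (Real.sqrt_mul (by positivity) _).symm
              have h4 : (2*L) * (8*L/Δstar^2) = (4*L/Δstar)^2 := by
                field_simp
                ring
              have h5 : Real.sqrt ((4*L/Δstar)^2) = 4*L/Δstar :=
                Real.sqrt_sq (by positivity)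
              calc 2 * Real.sqrt (2*L) * (2 * Real.sqrt NN)
                  ≤ 4 * (Real.sqrt (2*L) * Real.sqrt (8*L/Δstar^2)) := h2
                _ = 4 * (4*L/Δstar) := by rw [h3, h4, h5]
                _ = 16*L/Δstar := by ring
      calc ∑ i : Fin K, ∑ t ∈ S0.filter (fun t => I ω t = i), gp t
          ≤ ∑ _i : Fin K, (16*L/Δstar) := Finset.sum_le_sum (fun i _ => hfiber i)
        _ = K * (16*L/Δstar) := by
            rw [Finset.sum_const, Finset.card_univ, Fintype.card_fin, nsmul_eq_mul]
        _ = 16*K*L/Δstar := by ring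
    linarith
  ------------------------------------------------------------------
  -- case split and final assembly
  by_cases hex : ∀ (i : Fin K) (c : Fin C), ¬ (m i c < ⨆ j, m j c)
  · have hz : ∀ ω, (∑ t ∈ Finset.range T, ((⨆ j, m j (ctx t)) - m (I ω t) (ctx t))) = 0 := by
      intro ω
      apply Finset.sum_eq_zero
      intro t _
      obtain ⟨b, hb1, hb2⟩ := hsup (ctx t)
      have hle : m (I ω t) (ctx t) ≤ ⨆ j, m j (ctx t) := by
        rw [hb1]; exact hb2 _
      have hge := not_lt.mp (hex (I ω t) (ctx t))
      linarith
    simp only [hz]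
    rw [integral_zero]
    positivity
  · push_neg at hex
    obtain ⟨i0, c0, hi0⟩ := hex
    have hΔ1 : Δstar ≤ 1 := le_trans (hgapmin i0 c0 hi0) (hgap01 i0 c0).2
    have hCg0 : (0:ℝ) ≤ K + 16*K*L/Δstar := by positivity
    have hpoint : ∀ ω, (∑ t ∈ Finset.range T, ((⨆ j, m j (ctx t)) - m (I ω t) (ctx t)))
        ≤ (K + 16*K*L/Δstar) + B.indicator (fun _ => (T:ℝ)) ω := by
      intro ω
      by_cases hωB : ω ∈ B
      · rw [Set.indicator_of_mem hωB]
        have hsum : (∑ t ∈ Finset.range T, ((⨆ j, m j (ctx t)) - m (I ω t) (ctx t)))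
            ≤ (T:ℝ) := by
          calc ∑ t ∈ Finset.range T, ((⨆ j, m j (ctx t)) - m (I ω t) (ctx t))
              ≤ ∑ _t ∈ Finset.range T, (1:ℝ) :=
                Finset.sum_le_sum (fun t _ => (hgap01 (I ω t) (ctx t)).2)
            _ = T := by simp
        linarith
      · rw [Set.indicator_of_notMem hωB, add_zero]
        exact hclean ω hωB
    have hRegMeas : Measurable (fun ω =>
        ∑ t ∈ Finset.range T, ((⨆ j, m j (ctx t)) - m (I ω t) (ctx t))) := by
      apply Finset.measurable_sum
      intro t ht
      have htT := Finset.mem_range.mp ht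
      have hIt : (fun ω => m (I ω t) (ctx t)) = fun ω => m (A ω t) (ctx t) := by
        funext ω
        rw [hIA ω t htT]
      apply Measurable.sub measurable_const
      rw [hIt]
      exact (measurable_from_top (f := fun k : Fin K => m k (ctx t))).comp
        (hApack mΩ t (hrAll t) t le_rfl)
    have hRegInt : Integrable (fun ω =>
        ∑ t ∈ Finset.range T, ((⨆ j, m j (ctx t)) - m (I ω t) (ctx t))) μ := by
      refine Integrable.mono' (integrable_const (T:ℝ)) hRegMeas.aestronglyMeasurable
        (ae_of_all _ (fun ω => ?_))
      rw [Real.norm_eq_abs, abs_le]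
      constructor
      · have h1 : (0:ℝ) ≤ ∑ t ∈ Finset.range T, ((⨆ j, m j (ctx t)) - m (I ω t) (ctx t)) :=
          Finset.sum_nonneg (fun t _ => (hgap01 (I ω t) (ctx t)).1)
        linarith
      · calc ∑ t ∈ Finset.range T, ((⨆ j, m j (ctx t)) - m (I ω t) (ctx t))
            ≤ ∑ _t ∈ Finset.range T, (1:ℝ) :=
              Finset.sum_le_sum (fun t _ => (hgap01 (I ω t) (ctx t)).2)
          _ = T := by simp
    have hIndInt : Integrable (fun ω => B.indicator (fun _ => (T:ℝ)) ω) μ :=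
      (integrable_const (T:ℝ)).indicator hBmeas
    have hRHSInt : Integrable (fun ω =>
        (K + 16*K*L/Δstar) + B.indicator (fun _ => (T:ℝ)) ω) μ :=
      (integrable_const _).add hIndInt
    have hμBT : (μ B).toReal * T ≤ 2*K := by
      have hT3 : Real.exp (-(3*L)) * (T:ℝ)^3 = 1 := by
        have h1 : Real.exp L = T := by rw [hLdef]; exact Real.exp_log hT0'
        have h2 : ((T:ℝ))^3 = Real.exp (3*L) := by
          rw [← h1, ← Real.exp_nat_mul]
          norm_num
        rw [h2, ← Real.exp_add]
        simp
      have h1 := mul_le_mul_of_nonneg_right hμB (le_of_lt hT0')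
      calc (μ B).toReal * T ≤ (K : ℝ) * T * T * (2 * Real.exp (-(3*L))) * T := h1
        _ = 2*K * (Real.exp (-(3*L)) * (T:ℝ)^3) := by ring
        _ = 2*K := by rw [hT3, mul_one]
    calc ∫ ω, (∑ t ∈ Finset.range T, ((⨆ j, m j (ctx t)) - m (I ω t) (ctx t))) ∂μ
        ≤ ∫ ω, ((K + 16*K*L/Δstar) + B.indicator (fun _ => (T:ℝ)) ω) ∂μ :=
          integral_mono hRegInt hRHSInt hpoint
      _ = (K + 16*K*L/Δstar) + (μ B).toReal * T := by
          rw [integral_add (integrable_const _) hIndInt, integral_const,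
            integral_indicator_const _ hBmeas]
          simp [smul_eq_mul, Measure.real]
      _ ≤ (K + 16*K*L/Δstar) + 2*K := by linarith
      _ ≤ 100 * K * L / Δstar := by
          have hK1 : (1:ℝ) ≤ K := by exact_mod_cast hK
          have hD : Real.log 2 ≤ L/Δstar := by
            calc Real.log 2 ≤ L := hL2
              _ ≤ L/Δstar := by
                rw [le_div_iff₀ hΔ]
                nlinarith [hLpos, hΔ1, hΔ]
          have hlog2d : (0.6931471803 : ℝ) < Real.log 2 := Real.log_two_gt_d9
          have h84 : (3:ℝ) ≤ 84 * (L/Δstar) := by nlinarith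
          have hKpos : (0:ℝ) < K := by exact_mod_cast hK0
          have h3K : (3:ℝ)*K ≤ 84 * K * (L/Δstar) := by nlinarith
          have hsplitdiv : 16*K*L/Δstar = 16*K*(L/Δstar) := by ring
          have hsplitdiv2 : 100*K*L/Δstar = 100*K*(L/Δstar) := by ring
          rw [hsplitdiv, hsplitdiv2] at *
          nlinarith [h3K]
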